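/- Let X be a CAT(0) space with a block structure: a cover by closed convex subspaces, each block intersecting at least two others, each block assigned a parity (+) or (−) such that two blocks intersect only if they have opposite parity. Then the nerve of the collection of blocks contains no cycles of odd length; combined with the structural assumptions it is a tree (in particular, a bipartite graph). -/

import Mathlib

/-- A block structure on a metric space `X`: a cover by closed, (metrically) convex
subspaces, each block meeting at least two others, with a parity such that two blocks
intersect only if they have opposite parity, and an `ε > 0` such that two blocks
intersect iff their `ε`-neighborhoods intersect. -/
structure BlockStructure (X : Type*) [MetricSpace X] (ι : Type*) where
  B : ι → Set X
  closed : ∀ i, IsClosed (B i)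
  convex : ∀ i, ∀ x ∈ B i, ∀ y ∈ B i, ∀ z : X, dist x z + dist z y = dist x y → z ∈ B i
  cover : ∀ x : X, ∃ i, x ∈ B i
  meetsTwo : ∀ i, ∃ j k, j ≠ i ∧ k ≠ i ∧ j ≠ k ∧
    (B i ∩ B j).Nonempty ∧ (B i ∩ B k).Nonempty
  parity : ι → Bool
  parityCond : ∀ i j, i ≠ j → (B i ∩ B j).Nonempty → parity i ≠ parity j
  eps : ℝ
  epsPos : 0 < eps
  epsCond : ∀ i j, (B i ∩ B j).Nonempty ↔
    (Metric.thickening eps (B i) ∩ Metric.thickening eps (B j)).Nonempty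

/-- The nerve (1-skeleton) of the collection of blocks: two distinct blocks are
adjacent when they intersect. -/
def nerveGraph {X : Type*} [MetricSpace X] {ι : Type*} (bs : BlockStructure X ι) :
    SimpleGraph ι where
  Adj i j := i ≠ j ∧ (bs.B i ∩ bs.B j).Nonempty
  symm := by
    constructor
    intro i j h
    exact ⟨h.1.symm, by rw [Set.inter_comm]; exact h.2⟩
  loopless := by constructor; intro i h; exact h.1 rfl

/-- The nerve of a block structure contains no cycles of odd length (it is bipartite
via the parity condition): every closed walk has even length. -/

lemma parity_walk {X : Type*} [MetricSpace X] {ι : Type*} (bs : BlockStructure X ι) :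
    ∀ {i j : ι} (w : (nerveGraph bs).Walk i j),
      (bs.parity i = bs.parity j ↔ Even w.length) := by
  intro i j w
  induction w with
  | nil => simp
  | @cons a b c h p ih =>
    have hab : bs.parity a ≠ bs.parity b := bs.parityCond a b h.1 h.2
    simp only [SimpleGraph.Walk.length_cons, Nat.even_add_one, ← ih]
    constructor
    · intro hac hbc
      exact hab (hac.trans hbc.symm)
    · intro hnbc
      cases hb : bs.parity b <;> cases hc : bs.parity c <;>
        simp_all [Bool.eq_false_or_eq_true]

theorem stmt7 {X : Type*} [MetricSpace X] {ι : Type*} (bs : BlockStructure X ι) :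
    ∀ (i : ι) (w : (nerveGraph bs).Walk i i), Even w.length := by
  intro i w
  exact (parity_walk bs w).mp rfl
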